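/- Let n be a natural number and let W_n act on ℤ^n via the representation ρ. Then the group of ℤ-linear automorphisms of ℤ^n commuting with ρ(w) for every w ∈ W_n is exactly { diag(±1, …, ±1) }; in particular, the group Aut_{W_n}(ℤ^n) of W_n-equivariant automorphisms is isomorphic to C_2^n. -/

import Mathlib

/-- The relators `x̄_i²` of `W_n`, the free product of `n` copies of `C_2`. -/
def Wrels (n : ℕ) : Set (FreeGroup (Fin n)) :=
  Set.range fun i : Fin n => FreeGroup.of i ^ 2

/-- The group `W_n = C_2 * ⋯ * C_2` (`n` factors). -/
abbrev W (n : ℕ) : Type := PresentedGroup (Wrels n)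

/-- The generators `x̄_1, …, x̄_n` of `W_n`. -/
def xbar (n : ℕ) (i : Fin n) : W n := PresentedGroup.of i

/-- The linear map `diag(-1, …, -1, 1, -1, …, -1)` on `ℤⁿ` (entry `1` in position `i`). -/
def Dmap (n : ℕ) (i : Fin n) : (Fin n → ℤ) →ₗ[ℤ] (Fin n → ℤ) where
  toFun v := fun j => if j = i then v j else -v j
  map_add' u v := by funext j; by_cases h : j = i <;> simp [h] <;> ring
  map_smul' c v := by funext j; by_cases h : j = i <;> simp [h]

theorem Dmap_sq (n : ℕ) (i : Fin n) : Dmap n i * Dmap n i = 1 := by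
  apply LinearMap.ext
  intro v
  funext j
  by_cases h : j = i <;> simp [Dmap, Module.End.mul_apply, h]

/-- `Dmap n i` as a unit of the endomorphism ring, i.e. a linear automorphism. -/
def Dunit (n : ℕ) (i : Fin n) : ((Fin n → ℤ) →ₗ[ℤ] (Fin n → ℤ))ˣ :=
  ⟨Dmap n i, Dmap n i, Dmap_sq n i, Dmap_sq n i⟩

theorem Dunit_sq (n : ℕ) (i : Fin n) : Dunit n i ^ 2 = 1 := by
  rw [sq]
  exact Units.ext (Dmap_sq n i)

/-- The representation `ρ : W_n → GL_n(ℤ)`, with `ρ(x̄_i) = diag(-1,…,-1,1,-1,…,-1)`. -/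
def rho (n : ℕ) : W n →* ((Fin n → ℤ) →ₗ[ℤ] (Fin n → ℤ))ˣ :=
  PresentedGroup.toGroup (f := Dunit n) (by
    rintro r ⟨i, rfl⟩
    simp [Dunit_sq])

theorem rho_of (n : ℕ) (i : Fin n) : rho n (xbar n i) = Dunit n i :=
  PresentedGroup.toGroup.of _


section Aux

variable (n : ℕ)

/-- Diagonal linear map with entries `ε`. -/
def diagLin (ε : Fin n → ℤˣ) : (Fin n → ℤ) →ₗ[ℤ] (Fin n → ℤ) where
  toFun v := fun j => (ε j : ℤ) * v j
  map_add' u v := by funext j; simp; ring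
  map_smul' c v := by funext j; simp; ring

lemma diagLin_mul (ε ε' : Fin n → ℤˣ) :
    diagLin n ε * diagLin n ε' = diagLin n (ε * ε') := by
  apply LinearMap.ext; intro v; funext j
  simp [diagLin, Module.End.mul_apply]; ring

lemma diagLin_sq (ε : Fin n → ℤˣ) : diagLin n ε * diagLin n ε = 1 := by
  rw [diagLin_mul]
  apply LinearMap.ext; intro v; funext j
  simp [diagLin, ← Units.val_mul, Int.units_mul_self]

/-- Diagonal `±1` matrix as a unit. -/
def diagUnit (ε : Fin n → ℤˣ) : ((Fin n → ℤ) →ₗ[ℤ] (Fin n → ℤ))ˣ :=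
  ⟨diagLin n ε, diagLin n ε, diagLin_sq n ε, diagLin_sq n ε⟩

lemma diagUnit_mul (ε ε' : Fin n → ℤˣ) :
    diagUnit n ε * diagUnit n ε' = diagUnit n (ε * ε') :=
  Units.ext (diagLin_mul n ε ε')

lemma Dunit_eq_diagUnit (i : Fin n) :
    Dunit n i = diagUnit n (fun j => if j = i then 1 else -1) := by
  apply Units.ext
  apply LinearMap.ext; intro v; funext j
  by_cases h : j = i <;> simp [Dunit, Dmap, diagUnit, diagLin, h]

lemma diagUnit_mem_centralizer (ε : Fin n → ℤˣ) :
    diagUnit n ε ∈ Subgroup.centralizer (Set.range ⇑(rho n)) := by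
  rintro g ⟨w, rfl⟩
  have hw : w ∈ Subgroup.comap (rho n) (Subgroup.centralizer {diagUnit n ε}) := by
    apply PresentedGroup.generated_by
    intro i
    simp only [Subgroup.mem_comap]
    intro g hg
    rw [Set.mem_singleton_iff] at hg
    subst hg
    have h1 : rho n (PresentedGroup.of i) = Dunit n i := rho_of n i
    rw [h1, Dunit_eq_diagUnit, diagUnit_mul, diagUnit_mul, mul_comm]
  exact (hw _ rfl).symm

/-- Core computation: off-diagonal entries of a centralizing map vanish. -/
lemma centralizer_diag {n : ℕ} (u : ((Fin n → ℤ) →ₗ[ℤ] (Fin n → ℤ))ˣ)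
    (hu : u ∈ Subgroup.centralizer (Set.range ⇑(rho n)))
    (i j : Fin n) (hij : j ≠ i) :
    (u : (Fin n → ℤ) →ₗ[ℤ] (Fin n → ℤ)) (fun k => if i = k then (1:ℤ) else 0) j = 0 := by
  have hc : Dunit n i * u = u * Dunit n i := by
    have := hu (rho n (xbar n i)) ⟨xbar n i, rfl⟩
    rwa [rho_of] at this
  have hc' : (Dunit n i : (Fin n → ℤ) →ₗ[ℤ] (Fin n → ℤ)) * u.val
      = u.val * (Dunit n i : (Fin n → ℤ) →ₗ[ℤ] (Fin n → ℤ)) :=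
    congrArg Units.val hc
  set e : Fin n → ℤ := fun k => if i = k then (1:ℤ) else 0 with he
  have hDe : Dmap n i e = e := by
    funext k
    by_cases h : k = i
    · simp [Dmap, he, h]
    · have h' : ¬ i = k := fun hh => h hh.symm
      simp [Dmap, he, h, h']
  have key := congrFun (congrArg
    (fun (f : (Fin n → ℤ) →ₗ[ℤ] (Fin n → ℤ)) => f e) hc') j
  simp only [Module.End.mul_apply] at key
  rw [show ((Dunit n i : (Fin n → ℤ) →ₗ[ℤ] (Fin n → ℤ))) = Dmap n i from rfl, hDe] at key
  have h2 : Dmap n i (u.val e) j = u.val e j := key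
  simp only [Dmap, LinearMap.coe_mk, AddHom.coe_mk, if_neg hij] at h2
  linarith

/-- A centralizing map acts diagonally. -/
lemma centralizer_eval {n : ℕ} (u : ((Fin n → ℤ) →ₗ[ℤ] (Fin n → ℤ))ˣ)
    (hu : u ∈ Subgroup.centralizer (Set.range ⇑(rho n)))
    (v : Fin n → ℤ) (j : Fin n) :
    (u : (Fin n → ℤ) →ₗ[ℤ] (Fin n → ℤ)) v j
      = (u : (Fin n → ℤ) →ₗ[ℤ] (Fin n → ℤ)) (fun k => if j = k then 1 else 0) j * v j := by
  rw [LinearMap.pi_apply_eq_sum_univ u.val v]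
  simp only [Finset.sum_apply, Pi.smul_apply, smul_eq_mul]
  rw [Finset.sum_eq_single j]
  · ring
  · intro i _ hij
    rw [centralizer_diag u hu i j (Ne.symm hij)]
    ring
  · intro h; exact absurd (Finset.mem_univ j) h

end Aux

/-- Corollary `W-automorphisms`: the `ℤ`-linear automorphisms of `ℤⁿ`
commuting with the `W_n`-action given by `ρ` are exactly the diagonal `±1` matrices,
and they form a group isomorphic to `C_2^n`. -/
theorem stmt11 (n : ℕ) :
    (∀ u : ((Fin n → ℤ) →ₗ[ℤ] (Fin n → ℤ))ˣ,
      u ∈ Subgroup.centralizer (Set.range ⇑(rho n)) ↔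
        ∃ ε : Fin n → ℤˣ, ∀ (v : Fin n → ℤ) (j : Fin n),
          (u : (Fin n → ℤ) →ₗ[ℤ] (Fin n → ℤ)) v j = (ε j : ℤ) * v j) ∧
    Nonempty (Subgroup.centralizer (Set.range ⇑(rho n)) ≃* (Fin n → ℤˣ)) := by
  have main : ∀ u : ((Fin n → ℤ) →ₗ[ℤ] (Fin n → ℤ))ˣ,
      u ∈ Subgroup.centralizer (Set.range ⇑(rho n)) ↔
        ∃ ε : Fin n → ℤˣ, ∀ (v : Fin n → ℤ) (j : Fin n),
          (u : (Fin n → ℤ) →ₗ[ℤ] (Fin n → ℤ)) v j = (ε j : ℤ) * v j := by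
    intro u
    constructor
    · intro hu
      have hinv : u⁻¹ ∈ Subgroup.centralizer (Set.range ⇑(rho n)) :=
        (Subgroup.centralizer _).inv_mem hu
      have hcd : ∀ j : Fin n,
          u.val (fun k => if j = k then 1 else 0) j
            * (↑u⁻¹ : (Fin n → ℤ) →ₗ[ℤ] (Fin n → ℤ)) (fun k => if j = k then 1 else 0) j
            = 1 := by
        intro j
        set e : Fin n → ℤ := fun k => if j = k then (1:ℤ) else 0 with he
        have h3 : u.val * (↑u⁻¹ : (Fin n → ℤ) →ₗ[ℤ] (Fin n → ℤ)) = 1 := u.mul_inv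
        have h2 : u.val ((↑u⁻¹ : (Fin n → ℤ) →ₗ[ℤ] (Fin n → ℤ)) e) = e := by
          have h5 := congrFun (congrArg
            (fun (f : (Fin n → ℤ) →ₗ[ℤ] (Fin n → ℤ)) => f e) h3)
          funext k
          have hk := h5 k
          simp only [Module.End.mul_apply, Module.End.one_apply] at hk
          exact hk
        have h1 := centralizer_eval u hu
          ((↑u⁻¹ : (Fin n → ℤ) →ₗ[ℤ] (Fin n → ℤ)) e) j
        rw [h2] at h1
        have h6 : e j = (1:ℤ) := by simp [he]
        rw [h6] at h1
        exact h1.symm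
      refine ⟨fun j => Units.mkOfMulEqOne _ _ (hcd j), ?_⟩
      intro v j
      rw [Units.val_mkOfMulEqOne]
      exact centralizer_eval u hu v j
    · rintro ⟨ε, hε⟩
      have hu : u = diagUnit n ε := by
        apply Units.ext
        apply LinearMap.ext; intro v; funext j
        exact hε v j
      rw [hu]
      exact diagUnit_mem_centralizer n ε
  refine ⟨main, ?_⟩
  let Φ : (Fin n → ℤˣ) →* Subgroup.centralizer (Set.range ⇑(rho n)) :=
    { toFun := fun ε => ⟨diagUnit n ε, diagUnit_mem_centralizer n ε⟩
      map_one' := by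
        apply Subtype.ext
        apply Units.ext
        apply LinearMap.ext; intro v; funext j
        simp [diagUnit, diagLin]
      map_mul' := fun ε ε' => by
        apply Subtype.ext
        exact (diagUnit_mul n ε ε').symm }
  have hbij : Function.Bijective Φ := by
    constructor
    · intro ε ε' h
      have h1 : diagUnit n ε = diagUnit n ε' := congrArg Subtype.val h
      have h2 : diagLin n ε = diagLin n ε' := congrArg Units.val h1
      funext j
      have := congrFun (congrArg (fun f : (Fin n → ℤ) →ₗ[ℤ] (Fin n → ℤ) =>
        f (fun k => if j = k then (1:ℤ) else 0)) h2) j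
      simp only [diagLin, LinearMap.coe_mk, AddHom.coe_mk] at this
      simp at this
      exact Units.ext this
    · rintro ⟨u, hu⟩
      obtain ⟨ε, hε⟩ := (main u).mp hu
      refine ⟨ε, ?_⟩
      apply Subtype.ext
      apply Units.ext
      apply LinearMap.ext; intro v; funext j
      exact (hε v j).symm
  exact ⟨(MulEquiv.ofBijective Φ hbij).symm⟩
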